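/- For a smooth function g : ℝ → ℝ and real numbers x, h, the Simpson's rule identity holds: g(x+h) - g(x-h) = (h/3)(g'(x-h) + 4g'(x) + g'(x+h)) + (1/6)∫_0^h (g⁗(x-u) - g⁗(x+u)) · u(h-u)² du. -/

import Mathlib

/-- Simpson's rule identity with integral remainder: for a `C⁴` function `g`,
`g(x+h) - g(x-h) = (h/3)(g'(x-h) + 4g'(x) + g'(x+h))
  + (1/6)∫₀^h (g⁗(x-u) - g⁗(x+u)) u (h-u)² du`. -/
theorem simpson_rule_integral_remainder
    (g : ℝ → ℝ) (hg : ContDiff ℝ 4 g) (x h : ℝ) :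
    g (x + h) - g (x - h)
      = h/3 * (deriv g (x - h) + 4 * deriv g x + deriv g (x + h))
        + (1/6) * ∫ u in (0:ℝ)..h,
            (iteratedDeriv 4 g (x - u) - iteratedDeriv 4 g (x + u)) * (u * (h - u)^2) := by
  have hD : ∀ k : ℕ, k < 4 → ∀ y : ℝ, HasDerivAt (iteratedDeriv k g) (iteratedDeriv (k+1) g y) y := by
    intro k hk y
    rw [iteratedDeriv_succ]
    exact ((hg.differentiable_iteratedDeriv k (by exact_mod_cast hk)) y).hasDerivAt
  have hplus : ∀ k : ℕ, k < 4 → ∀ u : ℝ,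
      HasDerivAt (fun u => iteratedDeriv k g (x + u)) (iteratedDeriv (k+1) g (x + u)) u := by
    intro k hk u
    simpa [Function.comp_def] using (hD k hk (x + u)).comp u ((hasDerivAt_id u).const_add x)
  have hminus : ∀ k : ℕ, k < 4 → ∀ u : ℝ,
      HasDerivAt (fun u => iteratedDeriv k g (x - u)) (-(iteratedDeriv (k+1) g (x - u))) u := by
    intro k hk u
    simpa [Function.comp_def] using (hD k hk (x - u)).comp u ((hasDerivAt_id u).const_sub x)
  set G : ℝ → ℝ := fun u =>
      (iteratedDeriv 0 g (x+u) - iteratedDeriv 0 g (x-u))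
      - (iteratedDeriv 1 g (x+u) + iteratedDeriv 1 g (x-u)) * (u - 2*h/3)
      + (iteratedDeriv 2 g (x+u) - iteratedDeriv 2 g (x-u)) * ((h-u)*(h-3*u)/6)
      - (iteratedDeriv 3 g (x+u) + iteratedDeriv 3 g (x-u)) * (u*(h-u)^2/6) with hGdef
  have hG : ∀ u : ℝ, HasDerivAt G
      ((iteratedDeriv 4 g (x - u) - iteratedDeriv 4 g (x + u)) * (u * (h - u)^2) / 6) u := by
    intro u
    have h1 : HasDerivAt (fun u : ℝ => u - 2*h/3) 1 u := (hasDerivAt_id u).sub_const _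
    have h2 : HasDerivAt (fun u : ℝ => (h-u)*(h-3*u)/6) (u - 2*h/3) u := by
      have := (((hasDerivAt_const u h).sub (hasDerivAt_id u)).mul
        ((hasDerivAt_const u h).sub ((hasDerivAt_id u).const_mul 3))).div_const 6
      simp only [id_eq] at this
      exact this.congr_deriv (by simp only [Pi.sub_apply, Pi.mul_apply, id_eq]; ring)
    have h3 : HasDerivAt (fun u : ℝ => u*(h-u)^2/6) ((h-u)*(h-3*u)/6) u := by
      have := ((hasDerivAt_id u).mul
        (((hasDerivAt_const u h).sub (hasDerivAt_id u)).pow 2)).div_const 6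
      simp only [id_eq] at this
      exact this.congr_deriv (by simp only [Pi.sub_apply, Pi.mul_apply, Pi.pow_apply, id_eq]; norm_num; ring)
    have key := ((((hplus 0 (by norm_num) u).sub (hminus 0 (by norm_num) u)).sub
        (((hplus 1 (by norm_num) u).add (hminus 1 (by norm_num) u)).mul h1)).add
        (((hplus 2 (by norm_num) u).sub (hminus 2 (by norm_num) u)).mul h2)).sub
        (((hplus 3 (by norm_num) u).add (hminus 3 (by norm_num) u)).mul h3)
    exact key.congr_deriv (by norm_num; ring)
  have h4c : Continuous (iteratedDeriv 4 g) := hg.continuous_iteratedDeriv 4 le_rfl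
  have hcont : Continuous (fun u : ℝ =>
      (iteratedDeriv 4 g (x - u) - iteratedDeriv 4 g (x + u)) * (u * (h - u)^2) / 6) := by
    fun_prop
  have key : (∫ u in (0:ℝ)..h,
      (iteratedDeriv 4 g (x - u) - iteratedDeriv 4 g (x + u)) * (u * (h - u)^2) / 6)
      = G h - G 0 :=
    intervalIntegral.integral_eq_sub_of_hasDerivAt (fun u _ => hG u)
      (hcont.intervalIntegrable _ _)
  rw [intervalIntegral.integral_div] at key
  have hint : (∫ u in (0:ℝ)..h,
      (iteratedDeriv 4 g (x - u) - iteratedDeriv 4 g (x + u)) * (u * (h - u)^2))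
      = 6 * (G h - G 0) := by
    rw [← key]; ring
  rw [hint]
  simp only [hGdef, iteratedDeriv_zero, iteratedDeriv_one, add_zero, sub_zero]
  ring
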